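/- arXiv:1703.08606 — 3 statements merged into one kernel-verified Lean document; each statement's English description precedes it below -/
import Mathlib

section
/- Let G be a group and suppose the collection of non-generic subsets of G is an ideal (closed under subsets and finite unions), where a subset is generic if finitely many right translates of it cover G. If X and Y are generic subsets of G, then there exist a generic subset A′ ⊆ X and an element g ∈ G such that A′⁻¹·g ⊆ Y. -/
/-- right translate S·g -/
def rT {G : Type*} [Group G] (S : Set G) (g : G) : Set G := (· * g) '' S

/-- S is generic: finitely many right translates of S cover G. -/
def IsGeneric {G : Type*} [Group G] (S : Set G) : Prop :=
  ∃ (n : ℕ) (c : Fin n → G), ∀ x : G, ∃ i, x ∈ rT S (c i)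

/-- If non-generic sets form an ideal (of a generic finite union,
some piece is generic; subsets of non-generics are non-generic), and X, Y are
generic, then there is a generic A′ ⊆ X and g ∈ G with A′⁻¹·g ⊆ Y. -/
theorem stmt4 {G : Type*} [Group G] (X Y : Set G)
    (hX : IsGeneric X) (hY : IsGeneric Y)
    (hIdeal : ∀ (n : ℕ) (F : Fin n → Set G), IsGeneric (⋃ i, F i) → ∃ i, IsGeneric (F i))
    (hMono : ∀ S T : Set G, S ⊆ T → IsGeneric S → IsGeneric T) :
    ∃ (A' : Set G) (g : G), A' ⊆ X ∧ IsGeneric A' ∧ (∀ a ∈ A', a⁻¹ * g ∈ Y) := by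
  obtain ⟨n, c, hc⟩ := hY
  set F : Fin n → Set G := fun i => {a ∈ X | a⁻¹ * (c i)⁻¹ ∈ Y} with hF
  have hcov : X ⊆ ⋃ i, F i := by
    intro a ha
    obtain ⟨i, y, hy, hyi⟩ := hc a⁻¹
    refine Set.mem_iUnion.2 ⟨i, ha, ?_⟩
    have : a⁻¹ = y * c i := hyi.symm
    rw [this, mul_inv_cancel_right]
    exact hy
  obtain ⟨i, hi⟩ := hIdeal n F (hMono X _ hcov hX)
  exact ⟨F i, (c i)⁻¹, fun a ha => ha.1, hi, fun a ha => ha.2⟩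
end

section
/- Let G be a group, H a group, and suppose given: sets A′, B ⊆ G, elements s ∈ A′, t ∈ B with A′⁻¹·(s·t) ⊆ B, injective maps f on a set U ⊇ A′, g on V ⊇ B ∪ A′⁻¹·s·t, h on W ⊇ A′·B into H, such that f(x)·g(y) = h(x·y) for all (x,y) ∈ A′ × B. Then the map φ : A′⁻¹·s → H defined by φ(x⁻¹·s) = f(x)⁻¹·f(s) for x ∈ A′ is a local homomorphism: whenever x₁, x₂, z ∈ A′ satisfy z⁻¹ = x₁⁻¹·s·x₂⁻¹, one has f(x₁)·f(z)⁻¹·f(x₂) = f(s), hence φ((x₁⁻¹·s)·(x₂⁻¹·s)) = φ(x₁⁻¹·s)·φ(x₂⁻¹·s). -/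
open scoped Pointwise

/-- cocycle setup: f(x)·g(y) = h(x·y) on A′ × B, s ∈ A′, t ∈ B,
A′⁻¹·(s·t) ⊆ B. Then φ(x⁻¹·s) = f(x)⁻¹·f(s) is a local homomorphism: if
x₁, x₂, z ∈ A′ with z⁻¹ = x₁⁻¹·s·x₂⁻¹ then f(x₁)·f(z)⁻¹·f(x₂) = f(s). -/
theorem stmt11 {G H : Type*} [Group G] [Group H] (A' B : Set G) (s t : G)
    (hs : s ∈ A') (ht : t ∈ B)
    (hAB : ∀ a ∈ A', a⁻¹ * (s * t) ∈ B)
    (f g h : G → H)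
    (hf : Set.InjOn f A') (hg : Set.InjOn g B) (hh : Set.InjOn h (A' * B))
    (hcoc : ∀ x ∈ A', ∀ y ∈ B, f x * g y = h (x * y)) :
    ∀ x₁ ∈ A', ∀ x₂ ∈ A', ∀ z ∈ A', z⁻¹ = x₁⁻¹ * s * x₂⁻¹ →
      f x₁ * (f z)⁻¹ * f x₂ = f s := by
  intro x₁ hx₁ x₂ hx₂ z hz hzeq
  have hBz : z⁻¹ * (s * t) ∈ B := hAB z hz
  have hBx₂ : x₂⁻¹ * (s * t) ∈ B := hAB x₂ hx₂
  -- g(z⁻¹st) in terms of f z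
  have e1 : f z * g (z⁻¹ * (s * t)) = f s * g t := by
    rw [hcoc z hz _ hBz, hcoc s hs t ht]
    congr 1
    group
  have e2 : f x₂ * g (x₂⁻¹ * (s * t)) = f s * g t := by
    rw [hcoc x₂ hx₂ _ hBx₂, hcoc s hs t ht]
    congr 1
    group
  have e3 : f x₁ * g (z⁻¹ * (s * t)) = f s * g (x₂⁻¹ * (s * t)) := by
    rw [hcoc x₁ hx₁ _ hBz, hcoc s hs _ hBx₂]
    congr 1
    rw [hzeq]
    group
  have h1 : g (z⁻¹ * (s * t)) = (f z)⁻¹ * (f s * g t) := by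
    rw [← e1]; group
  have h2 : g (x₂⁻¹ * (s * t)) = (f x₂)⁻¹ * (f s * g t) := by
    rw [← e2]; group
  rw [h1, h2] at e3
  have : f x₁ * (f z)⁻¹ * (f s * g t) = f s * (f x₂)⁻¹ * (f s * g t) := by
    rw [mul_assoc, mul_assoc, e3]
  have := mul_right_cancel this
  calc f x₁ * (f z)⁻¹ * f x₂ = f s * (f x₂)⁻¹ * f x₂ := by rw [this]
    _ = f s := by group
end

section
/- Under the cocycle hypotheses (G, H groups; A′, B ⊆ G with s ∈ A′, t ∈ B, A′⁻¹·(s·t) ⊆ B; injective f, g, h with f(x)·g(y) = h(x·y) on A′ × B), the inverse map φ⁻¹ : f(A′)⁻¹·f(s) → A′⁻¹·s given by φ⁻¹(y⁻¹·f(s)) = f⁻¹(y)⁻¹·s for y ∈ f(A′) is a local homomorphism: if x₁, x₂ ∈ A′ and w ∈ f(A′) satisfy w⁻¹ = f(x₁)⁻¹·f(s)·f(x₂)⁻¹, then x₁·f⁻¹(w)⁻¹·x₂ = s. -/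
open scoped Pointwise

/-- under the cocycle hypotheses, the inverse map
φ⁻¹(y⁻¹·f(s)) = f⁻¹(y)⁻¹·s is a local homomorphism: if x₁, x₂, w ∈ A′ with
(f w)⁻¹ = f(x₁)⁻¹·f(s)·f(x₂)⁻¹ then x₁·w⁻¹·x₂ = s. -/
theorem stmt13 {G H : Type*} [Group G] [Group H] (A' B : Set G) (s t : G)
    (hs : s ∈ A') (ht : t ∈ B)
    (hAB : ∀ a ∈ A', a⁻¹ * (s * t) ∈ B)
    (f g h : G → H)
    (hf : Set.InjOn f A') (hg : Set.InjOn g B) (hh : Set.InjOn h (A' * B))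
    (hcoc : ∀ x ∈ A', ∀ y ∈ B, f x * g y = h (x * y)) :
    ∀ x₁ ∈ A', ∀ x₂ ∈ A', ∀ w ∈ A',
      (f w)⁻¹ = (f x₁)⁻¹ * f s * (f x₂)⁻¹ → x₁ * w⁻¹ * x₂ = s := by
  intro x₁ hx₁ x₂ hx₂ w hw heq
  have hfs : f x₁ * (f w)⁻¹ * f x₂ = f s := by
    rw [heq]; group
  have hB1 : w⁻¹ * (s * t) ∈ B := hAB w hw
  have hB2 : x₂⁻¹ * (s * t) ∈ B := hAB x₂ hx₂
  have e1 : f w * g (w⁻¹ * (s * t)) = h (s * t) := by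
    rw [hcoc w hw _ hB1]; congr 1; group
  have e2 : f x₂ * g (x₂⁻¹ * (s * t)) = h (s * t) := by
    rw [hcoc x₂ hx₂ _ hB2]; congr 1; group
  have e3 : f x₁ * g (w⁻¹ * (s * t)) = h (x₁ * (w⁻¹ * (s * t))) := hcoc x₁ hx₁ _ hB1
  have e4 : f s * g (x₂⁻¹ * (s * t)) = h (s * (x₂⁻¹ * (s * t))) := hcoc s hs _ hB2
  have key : h (x₁ * (w⁻¹ * (s * t))) = h (s * (x₂⁻¹ * (s * t))) := by
    rw [← e3, ← e4, ← hfs]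
    calc f x₁ * g (w⁻¹ * (s * t))
        = f x₁ * (f w)⁻¹ * (f w * g (w⁻¹ * (s * t))) := by group
      _ = f x₁ * (f w)⁻¹ * (f x₂ * g (x₂⁻¹ * (s * t))) := by rw [e1, e2]
      _ = f x₁ * (f w)⁻¹ * f x₂ * g (x₂⁻¹ * (s * t)) := by group
  have hmem1 : x₁ * (w⁻¹ * (s * t)) ∈ A' * B := Set.mul_mem_mul hx₁ hB1
  have hmem2 : s * (x₂⁻¹ * (s * t)) ∈ A' * B := Set.mul_mem_mul hs hB2
  have hG : x₁ * (w⁻¹ * (s * t)) = s * (x₂⁻¹ * (s * t)) := hh hmem1 hmem2 key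
  have hcan : x₁ * w⁻¹ = s * x₂⁻¹ := by
    have : (x₁ * w⁻¹) * (s * t) = (s * x₂⁻¹) * (s * t) := by
      rw [mul_assoc, mul_assoc]; exact hG
    exact mul_right_cancel this
  rw [hcan]; group
end
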